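/- The ideal non-extended formulation for the ReLU neuron is ideal: its LP relaxation P equals the convex hull of its integer-feasible points, i.e. P = convexHull ℝ (A ∪ B), where A = {(x, 0, 0) : x ∈ [L,U], f x ≤ 0} and B = {(x, f x, 1) : x ∈ [L,U], 0 ≤ f x}. -/

import Mathlib

open Finset

/-- The affine function `f(x) = w · x + b`. -/
noncomputable def fAff {η : ℕ} (w : Fin η → ℝ) (b : ℝ) (x : Fin η → ℝ) : ℝ :=
  (∑ i, w i * x i) + b

/-- The rectified linear unit. -/
noncomputable def ReLU (v : ℝ) : ℝ := max 0 v

/-- The box `[L, U]`. -/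
def Box {η : ℕ} (L U : Fin η → ℝ) : Set (Fin η → ℝ) :=
  {x | ∀ i, L i ≤ x i ∧ x i ≤ U i}

/-- `L̆ i`. -/
noncomputable def Lbreve {η : ℕ} (w L U : Fin η → ℝ) (i : Fin η) : ℝ :=
  if 0 ≤ w i then L i else U i

/-- `Ŭ i`. -/
noncomputable def Ubreve {η : ℕ} (w L U : Fin η → ℝ) (i : Fin η) : ℝ :=
  if 0 ≤ w i then U i else L i

/-- The graph of the ReLU neuron over the box. -/
noncomputable def grSet {η : ℕ} (w : Fin η → ℝ) (b : ℝ) (L U : Fin η → ℝ) :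
    Set ((Fin η → ℝ) × ℝ) :=
  {p | ∃ x ∈ Box L U, p = (x, ReLU (fAff w b x))}

/-- The LP relaxation `P` of the ideal non-extended formulation. A point is
`(x, y, z)` with `x = p.1`, `y = p.2.1`, `z = p.2.2`. -/
noncomputable def Pset {η : ℕ} (w : Fin η → ℝ) (b : ℝ) (L U : Fin η → ℝ) :
    Set ((Fin η → ℝ) × ℝ × ℝ) :=
  {p | p.1 ∈ Box L U ∧ 0 ≤ p.2.1 ∧ 0 ≤ p.2.2 ∧ p.2.2 ≤ 1 ∧ fAff w b p.1 ≤ p.2.1 ∧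
    ∀ I : Finset (Fin η), (∀ i ∈ I, w i ≠ 0) →
      p.2.1 ≤ (∑ i ∈ I, w i * (p.1 i - Lbreve w L U i * (1 - p.2.2)))
        + (b + ∑ i ∈ Iᶜ, w i * Ubreve w L U i) * p.2.2}

/-- The LP relaxation `R` of the big-`M` formulation. -/
noncomputable def Rset {η : ℕ} (w : Fin η → ℝ) (b : ℝ) (L U : Fin η → ℝ) :
    Set ((Fin η → ℝ) × ℝ × ℝ) :=
  {p | p.1 ∈ Box L U ∧ 0 ≤ p.2.1 ∧ 0 ≤ p.2.2 ∧ p.2.2 ≤ 1 ∧ fAff w b p.1 ≤ p.2.1 ∧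
    p.2.1 ≤ fAff w b p.1 - ((∑ i, w i * Lbreve w L U i) + b) * (1 - p.2.2) ∧
    p.2.1 ≤ ((∑ i, w i * Ubreve w L U i) + b) * p.2.2}

/-- The LP relaxation `Q` of the multiple-choice extended formulation. A point is
`(x, y, z, x⁰, x¹, y⁰, y¹)`. -/
noncomputable def Qset {η : ℕ} (w : Fin η → ℝ) (b : ℝ) (L U : Fin η → ℝ) :
    Set ((Fin η → ℝ) × ℝ × ℝ × (Fin η → ℝ) × (Fin η → ℝ) × ℝ × ℝ) :=
  {q | match q with
    | (x, y, z, x0, x1, y0, y1) =>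
      x = x0 + x1 ∧ y = y0 + y1 ∧ y0 = 0 ∧
      (∑ i, w i * x0 i) + b * (1 - z) ≤ 0 ∧
      y1 = (∑ i, w i * x1 i) + b * z ∧ 0 ≤ y1 ∧
      (∀ i, L i * (1 - z) ≤ x0 i ∧ x0 i ≤ U i * (1 - z)) ∧
      (∀ i, L i * z ≤ x1 i ∧ x1 i ≤ U i * z) ∧
      0 ≤ z ∧ z ≤ 1}

/-- The ideal non-extended formulation is ideal: its LP relaxation equals the convex
hull of its integer-feasible points. -/
lemma wLbreve_le {η : ℕ} (w L U : Fin η → ℝ) {x : Fin η → ℝ} (hx : x ∈ Box L U) (i : Fin η) :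
    w i * Lbreve w L U i ≤ w i * x i := by
  unfold Lbreve; split_ifs with h
  · exact mul_le_mul_of_nonneg_left (hx i).1 h
  · exact mul_le_mul_of_nonpos_left (hx i).2 (le_of_lt (not_le.1 h))

lemma le_wUbreve {η : ℕ} (w L U : Fin η → ℝ) {x : Fin η → ℝ} (hx : x ∈ Box L U) (i : Fin η) :
    w i * x i ≤ w i * Ubreve w L U i := by
  unfold Ubreve; split_ifs with h
  · exact mul_le_mul_of_nonneg_left (hx i).2 h
  · exact mul_le_mul_of_nonpos_left (hx i).1 (le_of_lt (not_le.1 h))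

lemma fAff_combo {η : ℕ} (w : Fin η → ℝ) (b : ℝ) (x x' : Fin η → ℝ) (a a' : ℝ)
    (hab : a + a' = 1) :
    fAff w b (a • x + a' • x') = a * fAff w b x + a' * fAff w b x' := by
  unfold fAff
  have : ∑ i, w i * (a • x + a' • x') i = a * ∑ i, w i * x i + a' * ∑ i, w i * x' i := by
    rw [Finset.mul_sum, Finset.mul_sum, ← Finset.sum_add_distrib]
    exact Finset.sum_congr rfl fun i _ => by simp [smul_eq_mul]; ring
  have ha' : a' = 1 - a := by linarith
  rw [this, ha']; ring

lemma exists_mid {η : ℕ} (w l u : Fin η → ℝ) (hlu : ∀ i, l i ≤ u i) (t : ℝ)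
    (hm : ∑ i, w i * (if 0 ≤ w i then l i else u i) ≤ t)
    (hM : t ≤ ∑ i, w i * (if 0 ≤ w i then u i else l i)) :
    ∃ v : Fin η → ℝ, (∀ i, l i ≤ v i ∧ v i ≤ u i) ∧ ∑ i, w i * v i = t := by
  set xmin : Fin η → ℝ := fun i => if 0 ≤ w i then l i else u i with hxmin
  set xmax : Fin η → ℝ := fun i => if 0 ≤ w i then u i else l i with hxmax
  set m := ∑ i, w i * xmin i with hmdef
  set M := ∑ i, w i * xmax i with hMdef
  have hminmem : ∀ i, l i ≤ xmin i ∧ xmin i ≤ u i := by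
    intro i; simp only [hxmin]; split_ifs <;> exact ⟨by linarith [hlu i], by linarith [hlu i]⟩
  have hmaxmem : ∀ i, l i ≤ xmax i ∧ xmax i ≤ u i := by
    intro i; simp only [hxmax]; split_ifs <;> exact ⟨by linarith [hlu i], by linarith [hlu i]⟩
  by_cases h : m < M
  · set s := (t - m) / (M - m) with hs
    have hs0 : 0 ≤ s := div_nonneg (by linarith) (by linarith)
    have hs1 : s ≤ 1 := by rw [hs, div_le_one (by linarith)]; linarith
    refine ⟨fun i => (1 - s) * xmin i + s * xmax i, fun i => ?_, ?_⟩
    · constructor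
      · show l i ≤ (1 - s) * xmin i + s * xmax i
        nlinarith [mul_nonneg (by linarith : (0:ℝ) ≤ 1 - s)
            (by linarith [(hminmem i).1] : 0 ≤ xmin i - l i),
          mul_nonneg hs0 (by linarith [(hmaxmem i).1] : 0 ≤ xmax i - l i)]
      · show (1 - s) * xmin i + s * xmax i ≤ u i
        nlinarith [mul_nonneg (by linarith : (0:ℝ) ≤ 1 - s)
            (by linarith [(hminmem i).2] : 0 ≤ u i - xmin i),
          mul_nonneg hs0 (by linarith [(hmaxmem i).2] : 0 ≤ u i - xmax i)]
    · have : ∑ i, w i * ((1 - s) * xmin i + s * xmax i)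
          = (1 - s) * m + s * M := by
        rw [hmdef, hMdef, Finset.mul_sum, Finset.mul_sum, ← Finset.sum_add_distrib]
        exact Finset.sum_congr rfl fun i _ => by ring
      have hsM : s * (M - m) = t - m := by
        rw [hs]; exact div_mul_cancel₀ _ (by linarith : M - m ≠ 0)
      rw [this]; linear_combination hsM
  · refine ⟨xmin, hminmem, ?_⟩
    have : M ≤ m := not_lt.1 h
    linarith

theorem ideal_formulation_ideal {η : ℕ} (w : Fin η → ℝ) (b : ℝ) (L U : Fin η → ℝ)
    (hLU : ∀ i, L i < U i) :
    Pset w b L U = convexHull ℝ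
      ({p : (Fin η → ℝ) × ℝ × ℝ |
          ∃ x ∈ Box L U, fAff w b x ≤ 0 ∧ p = (x, 0, 0)} ∪
       {p : (Fin η → ℝ) × ℝ × ℝ |
          ∃ x ∈ Box L U, 0 ≤ fAff w b x ∧ p = (x, fAff w b x, 1)}) := by
  classical
  set S := ({p : (Fin η → ℝ) × ℝ × ℝ |
          ∃ x ∈ Box L U, fAff w b x ≤ 0 ∧ p = (x, 0, 0)} ∪
       {p : (Fin η → ℝ) × ℝ × ℝ |
          ∃ x ∈ Box L U, 0 ≤ fAff w b x ∧ p = (x, fAff w b x, 1)}) with hS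
  apply Set.Subset.antisymm
  · -- P ⊆ hull
    rintro ⟨x, y, z⟩ hp
    obtain ⟨hbox, hy0, hz0, hz1, hfy, hfam⟩ := hp
    simp only at hbox hy0 hz0 hz1 hfy hfam
    rcases eq_or_lt_of_le hz0 with hz0' | hzpos
    · -- z = 0
      have hz : z = 0 := hz0'.symm
      subst hz
      have h0 := hfam ∅ (by simp)
      rw [Finset.sum_empty] at h0
      have hy : y = 0 := le_antisymm (by linarith) hy0
      exact subset_convexHull ℝ S (Or.inl ⟨x, hbox, by rw [← hy]; exact hfy, by rw [hy]⟩)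
    · rcases eq_or_lt_of_le hz1 with hz1' | hzlt1
      · -- z = 1
        subst hz1'
        set I : Finset (Fin η) := Finset.univ.filter (fun i => w i ≠ 0) with hI
        have h1 := hfam I (fun i hi => (Finset.mem_filter.1 hi).2)
        have e1 : ∑ i ∈ I, w i * (x i - Lbreve w L U i * (1 - 1)) = ∑ i, w i * x i := by
          rw [show (1:ℝ) - 1 = 0 by ring]
          simp only [mul_zero, sub_zero]
          rw [hI]
          exact Finset.sum_filter_of_ne (fun i _ h => left_ne_zero_of_mul h)
        have e2 : ∑ i ∈ Iᶜ, w i * Ubreve w L U i = 0 := by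
          apply Finset.sum_eq_zero
          intro i hi
          have : ¬ (w i ≠ 0) := by
            have := Finset.mem_compl.1 hi
            simpa [hI] using this
          simp [not_not.1 this]
        rw [e1, e2, mul_one, add_zero] at h1
        have hy : y = fAff w b x := le_antisymm (by unfold fAff; linarith) hfy
        exact subset_convexHull ℝ S (Or.inr ⟨x, hbox, by rw [← hy]; exact hy0, by rw [hy]⟩)
      · -- 0 < z < 1
        have h1z : 0 < 1 - z := by linarith
        set l : Fin η → ℝ := fun i => max (L i * z) (x i - U i * (1 - z)) with hl
        set u : Fin η → ℝ := fun i => min (U i * z) (x i - L i * (1 - z)) with hu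
        have hlu : ∀ i, l i ≤ u i := by
          intro i
          obtain ⟨h1, h2⟩ := hbox i
          simp only [hl, hu]
          refine max_le (le_min ?_ ?_) (le_min ?_ ?_) <;> nlinarith [le_of_lt (hLU i)]
        have hmle : ∑ i, w i * (if 0 ≤ w i then l i else u i) ≤ y - b * z := by
          have step : ∀ i, w i * (if 0 ≤ w i then l i else u i) ≤ z * (w i * x i) := by
            intro i
            obtain ⟨h1, h2⟩ := hbox i
            split_ifs with hw
            · simp only [hl]
              rcases max_cases (L i * z) (x i - U i * (1 - z)) with ⟨he, -⟩ | ⟨he, -⟩ <;> rw [he]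
              · nlinarith [mul_nonneg (mul_nonneg hzpos.le hw) (sub_nonneg.2 h1)]
              · nlinarith [mul_nonneg (mul_nonneg h1z.le hw) (sub_nonneg.2 h2)]
            · have hw' : w i < 0 := not_le.1 hw
              simp only [hu]
              rcases min_cases (U i * z) (x i - L i * (1 - z)) with ⟨he, -⟩ | ⟨he, -⟩ <;> rw [he]
              · nlinarith [mul_nonneg (mul_nonneg hzpos.le (neg_nonneg.2 hw'.le)) (sub_nonneg.2 h2)]
              · nlinarith [mul_nonneg (mul_nonneg h1z.le (neg_nonneg.2 hw'.le)) (sub_nonneg.2 h1)]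
          have hzf : z * ((∑ i, w i * x i) + b) ≤ y := by
            rcases le_or_gt ((∑ i, w i * x i) + b) 0 with h | h
            · nlinarith
            · have : fAff w b x ≤ y := hfy
              unfold fAff at this
              nlinarith
          calc ∑ i, w i * (if 0 ≤ w i then l i else u i)
              ≤ ∑ i, z * (w i * x i) := Finset.sum_le_sum (fun i _ => step i)
            _ = z * ∑ i, w i * x i := by rw [Finset.mul_sum]
            _ ≤ y - b * z := by nlinarith [hzf]
        set I : Finset (Fin η) := Finset.univ.filter
          (fun i => w i ≠ 0 ∧
            w i * (x i - Lbreve w L U i * (1 - z)) ≤ w i * Ubreve w L U i * z) with hI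
        have hfamI := hfam I (fun i hi => ((Finset.mem_filter.1 hi).2).1)
        have hMge : y - b * z ≤ ∑ i, w i * (if 0 ≤ w i then u i else l i) := by
          have hin : ∀ i ∈ I, w i * (x i - Lbreve w L U i * (1 - z))
              ≤ w i * (if 0 ≤ w i then u i else l i) := by
            intro i hi
            obtain ⟨hwne, hca⟩ := (Finset.mem_filter.1 hi).2
            obtain ⟨h1, h2⟩ := hbox i
            split_ifs with hw
            · simp only [Lbreve, Ubreve, if_pos hw] at hca ⊢
              simp only [hu]
              rcases min_cases (U i * z) (x i - L i * (1 - z)) with ⟨he, -⟩ | ⟨he, -⟩ <;>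
                rw [he] <;> nlinarith
            · have hw' : w i < 0 := not_le.1 hw
              simp only [Lbreve, Ubreve, if_neg hw] at hca ⊢
              simp only [hl]
              rcases max_cases (L i * z) (x i - U i * (1 - z)) with ⟨he, -⟩ | ⟨he, -⟩ <;>
                rw [he] <;> nlinarith
          have hout : ∀ i ∈ Iᶜ, w i * Ubreve w L U i * z
              ≤ w i * (if 0 ≤ w i then u i else l i) := by
            intro i hi
            have hni := Finset.mem_compl.1 hi
            by_cases hw0 : w i = 0
            · simp [hw0]
            · have hac : w i * Ubreve w L U i * z < w i * (x i - Lbreve w L U i * (1 - z)) := by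
                rw [hI] at hni
                simp only [Finset.mem_filter, Finset.mem_univ, true_and, not_and] at hni
                exact lt_of_not_ge (hni hw0)
              obtain ⟨h1, h2⟩ := hbox i
              split_ifs with hw
              · simp only [Lbreve, Ubreve, if_pos hw] at hac ⊢
                simp only [hu]
                rcases min_cases (U i * z) (x i - L i * (1 - z)) with ⟨he, -⟩ | ⟨he, -⟩ <;>
                  rw [he] <;> nlinarith
              · have hw' : w i < 0 := not_le.1 hw
                simp only [Lbreve, Ubreve, if_neg hw] at hac ⊢
                simp only [hl]
                rcases max_cases (L i * z) (x i - U i * (1 - z)) with ⟨he, -⟩ | ⟨he, -⟩ <;>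
                  rw [he] <;> nlinarith
          rw [add_mul] at hfamI
          calc y - b * z
              ≤ (∑ i ∈ I, w i * (x i - Lbreve w L U i * (1 - z)))
                + (∑ i ∈ Iᶜ, w i * Ubreve w L U i) * z := by linarith
            _ = (∑ i ∈ I, w i * (x i - Lbreve w L U i * (1 - z)))
                + ∑ i ∈ Iᶜ, w i * Ubreve w L U i * z := by rw [Finset.sum_mul]
            _ ≤ (∑ i ∈ I, w i * (if 0 ≤ w i then u i else l i))
                + ∑ i ∈ Iᶜ, w i * (if 0 ≤ w i then u i else l i) :=
                add_le_add (Finset.sum_le_sum hin) (Finset.sum_le_sum hout)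
            _ = ∑ i, w i * (if 0 ≤ w i then u i else l i) :=
                Finset.sum_add_sum_compl I _
        obtain ⟨v, hvmem, hvsum⟩ := exists_mid w l u hlu (y - b * z) hmle hMge
        set xa : Fin η → ℝ := fun i => (x i - v i) / (1 - z) with hxa
        set xb : Fin η → ℝ := fun i => v i / z with hxb
        have hvb : ∀ i, L i * z ≤ v i ∧ v i ≤ U i * z ∧
            x i - U i * (1 - z) ≤ v i ∧ v i ≤ x i - L i * (1 - z) := by
          intro i
          obtain ⟨hv1, hv2⟩ := hvmem i
          simp only [hl] at hv1
          simp only [hu] at hv2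
          exact ⟨le_trans (le_max_left _ _) hv1, le_trans hv2 (min_le_left _ _),
            le_trans (le_max_right _ _) hv1, le_trans hv2 (min_le_right _ _)⟩
        have hxaBox : xa ∈ Box L U := by
          intro i
          obtain ⟨-, -, hv3, hv4⟩ := hvb i
          constructor
          · rw [hxa]; rw [le_div_iff₀ h1z]; linarith
          · rw [hxa]; rw [div_le_iff₀ h1z]; linarith
        have hxbBox : xb ∈ Box L U := by
          intro i
          obtain ⟨hv1, hv2, -, -⟩ := hvb i
          constructor
          · rw [hxb]; rw [le_div_iff₀ hzpos]; linarith
          · rw [hxb]; rw [div_le_iff₀ hzpos]; linarith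
        have hsa : (∑ i, w i * xa i) * (1 - z) = (∑ i, w i * x i) - (y - b * z) := by
          rw [Finset.sum_mul, ← hvsum, ← Finset.sum_sub_distrib]
          refine Finset.sum_congr rfl fun i _ => ?_
          rw [hxa]
          field_simp
        have hfa : fAff w b xa ≤ 0 := by
          show (∑ i, w i * xa i) + b ≤ 0
          have hfy' : (∑ i, w i * x i) + b ≤ y := hfy
          nlinarith [hsa]
        have hsb : (∑ i, w i * xb i) * z = y - b * z := by
          rw [Finset.sum_mul, ← hvsum]
          refine Finset.sum_congr rfl fun i _ => ?_
          rw [hxb]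
          field_simp
        have hfb : fAff w b xb = y / z := by
          show (∑ i, w i * xb i) + b = y / z
          rw [eq_div_iff hzpos.ne']
          linear_combination hsb
        have hfb0 : 0 ≤ fAff w b xb := by
          rw [hfb]; positivity
        have hpA : ((xa, 0, 0) : (Fin η → ℝ) × ℝ × ℝ) ∈ S :=
          Or.inl ⟨xa, hxaBox, hfa, rfl⟩
        have hpB : ((xb, y / z, 1) : (Fin η → ℝ) × ℝ × ℝ) ∈ S :=
          Or.inr ⟨xb, hxbBox, hfb0, by rw [hfb]⟩
        have hcomb := (convex_convexHull ℝ S) (subset_convexHull ℝ S hpA)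
          (subset_convexHull ℝ S hpB) (le_of_lt h1z) (le_of_lt hzpos) (by ring)
        have heq : (1 - z) • ((xa, 0, 0) : (Fin η → ℝ) × ℝ × ℝ)
            + z • ((xb, y / z, 1) : (Fin η → ℝ) × ℝ × ℝ) = (x, y, z) := by
          refine Prod.ext ?_ (Prod.ext ?_ ?_)
          · show (1 - z) • xa + z • xb = x
            funext i
            show (1 - z) * xa i + z * xb i = x i
            rw [hxa, hxb]
            field_simp
            ring
          · show (1 - z) * 0 + z * (y / z) = y
            field_simp
            ring
          · show (1 - z) * 0 + z * 1 = z
            ring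
        exact heq ▸ hcomb
  · -- hull ⊆ P
    apply convexHull_min
    · rintro p (⟨x, hx, hf, rfl⟩ | ⟨x, hx, hf, rfl⟩)
      · refine ⟨hx, le_refl 0, le_refl 0, zero_le_one, hf, ?_⟩
        intro I hI
        have hterm : ∀ i ∈ I, (0:ℝ) ≤ w i * (x i - Lbreve w L U i * (1 - 0)) := by
          intro i _
          have := wLbreve_le w L U hx i
          nlinarith
        have : (0:ℝ) ≤ ∑ i ∈ I, w i * (x i - Lbreve w L U i * (1 - 0)) :=
          Finset.sum_nonneg hterm
        simpa using this
      · refine ⟨hx, hf, zero_le_one, le_refl 1, le_refl _, ?_⟩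
        intro I hI
        have hsplit : ∑ i, w i * x i
            = (∑ i ∈ I, w i * x i) + ∑ i ∈ Iᶜ, w i * x i :=
          (Finset.sum_add_sum_compl I _).symm
        have hle : ∑ i ∈ Iᶜ, w i * x i ≤ ∑ i ∈ Iᶜ, w i * Ubreve w L U i :=
          Finset.sum_le_sum fun i _ => le_wUbreve w L U hx i
        show fAff w b x ≤ _
        unfold fAff
        rw [show (1:ℝ) - 1 = 0 by ring]
        simp only [mul_zero, sub_zero, mul_one]
        linarith
    · -- convexity of Pset
      rintro ⟨px, py, pz⟩ hp ⟨qx, qy, qz⟩ hq a a' ha ha' hab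
      obtain ⟨hp1, hp2, hp3, hp4, hp5, hp6⟩ := hp
      obtain ⟨hq1, hq2, hq3, hq4, hq5, hq6⟩ := hq
      simp only at hp1 hp2 hp3 hp4 hp5 hp6 hq1 hq2 hq3 hq4 hq5 hq6
      refine ⟨?_, ?_, ?_, ?_, ?_, ?_⟩
      · intro i
        show L i ≤ a * px i + a' * qx i ∧ a * px i + a' * qx i ≤ U i
        have hL : L i = a * L i + a' * L i := by rw [← add_mul, hab, one_mul]
        have hU : U i = a * U i + a' * U i := by rw [← add_mul, hab, one_mul]
        constructor
        · rw [hL]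
          exact add_le_add (mul_le_mul_of_nonneg_left (hp1 i).1 ha)
            (mul_le_mul_of_nonneg_left (hq1 i).1 ha')
        · rw [hU]
          exact add_le_add (mul_le_mul_of_nonneg_left (hp1 i).2 ha)
            (mul_le_mul_of_nonneg_left (hq1 i).2 ha')
      · exact add_nonneg (mul_nonneg ha hp2) (mul_nonneg ha' hq2)
      · exact add_nonneg (mul_nonneg ha hp3) (mul_nonneg ha' hq3)
      · show a * pz + a' * qz ≤ 1
        rw [← hab]
        exact add_le_add (by nlinarith) (by nlinarith)
      · show fAff w b (a • px + a' • qx) ≤ a * py + a' * qy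
        rw [fAff_combo w b px qx a a' hab]
        exact add_le_add (mul_le_mul_of_nonneg_left hp5 ha)
          (mul_le_mul_of_nonneg_left hq5 ha')
      · intro I hI
        have h1 := hp6 I hI
        have h2 := hq6 I hI
        show a * py + a' * qy ≤ (∑ i ∈ I, w i * ((a • px + a' • qx) i
            - Lbreve w L U i * (1 - (a * pz + a' * qz))))
          + (b + ∑ i ∈ Iᶜ, w i * Ubreve w L U i) * (a * pz + a' * qz)
        have hsum : ∑ i ∈ I, w i * ((a • px + a' • qx) i
            - Lbreve w L U i * (1 - (a * pz + a' * qz)))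
            = a * (∑ i ∈ I, w i * (px i - Lbreve w L U i * (1 - pz)))
              + a' * (∑ i ∈ I, w i * (qx i - Lbreve w L U i * (1 - qz))) := by
          rw [Finset.mul_sum, Finset.mul_sum, ← Finset.sum_add_distrib]
          refine Finset.sum_congr rfl fun i _ => ?_
          simp only [Pi.add_apply, Pi.smul_apply, smul_eq_mul]
          linear_combination (w i * Lbreve w L U i) * hab
        have hz' : (b + ∑ i ∈ Iᶜ, w i * Ubreve w L U i) * (a * pz + a' * qz)
            = a * ((b + ∑ i ∈ Iᶜ, w i * Ubreve w L U i) * pz)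
              + a' * ((b + ∑ i ∈ Iᶜ, w i * Ubreve w L U i) * qz) := by ring
        rw [hsum, hz']
        have k1 := mul_le_mul_of_nonneg_left h1 ha
        have k2 := mul_le_mul_of_nonneg_left h2 ha'
        rw [mul_add] at k1 k2
        linarith
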